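/- For every n ≥ 1, every m with 0 ≤ m ≤ n, and every k with 0 ≤ k ≤ n, the number of Dyck paths of semilength n with exactly m flaws and exactly k peaks equals the number of Dyck paths of semilength n with exactly n−m flaws and exactly n−k peaks; that is, p_{n,m,k} = p_{n,n−m,n−k}. -/

import Mathlib

/-- The height of a path (list of steps; `true` = up step `U`, `false` = down step `D`)
after all its steps: #U − #D. -/
def height (l : List Bool) : ℤ := (l.count true : ℤ) - (l.count false : ℤ)

/-- `l` is a Dyck path of semilength `n`: `2n` steps ending at height `0`
(equivalently, exactly `n` up steps). It may go below the x-axis. -/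
def IsDyck (n : ℕ) (l : List Bool) : Prop := l.length = 2 * n ∧ l.count true = n

/-- The number of flaws: up steps starting at negative height. -/
def flaws (l : List Bool) : ℕ :=
  ((Finset.range l.length).filter
    (fun i => l.getD i false = true ∧ height (l.take i) < 0)).card

/-- The number of peaks: positions where an up step is immediately followed by a down step. -/
def peaks (l : List Bool) : ℕ :=
  ((Finset.range (l.length - 1)).filter
    (fun i => l.getD i false = true ∧ l.getD (i + 1) false = false)).card

/-- The number of valleys: positions where a down step is immediately followed by an up step. -/
def valleys (l : List Bool) : ℕ :=
  ((Finset.range (l.length - 1)).filter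
    (fun i => l.getD i false = false ∧ l.getD (i + 1) false = true)).card

/-- The number of double ascents: positions of two consecutive up steps. -/
def dascents (l : List Bool) : ℕ :=
  ((Finset.range (l.length - 1)).filter
    (fun i => l.getD i false = true ∧ l.getD (i + 1) false = true)).card

/-- The number of double descents: positions of two consecutive down steps. -/
def ddescents (l : List Bool) : ℕ :=
  ((Finset.range (l.length - 1)).filter
    (fun i => l.getD i false = false ∧ l.getD (i + 1) false = false)).card

/-- `p n m k`: the number of Dyck paths of semilength `n` with `m` flaws and `k` peaks. -/
noncomputable def p (n m k : ℕ) : ℕ :=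
  Nat.card {l : List Bool // IsDyck n l ∧ flaws l = m ∧ peaks l = k}

/-- `v n m k`: the number of Dyck paths of semilength `n` with `m` flaws and `k` valleys. -/
noncomputable def v (n m k : ℕ) : ℕ :=
  Nat.card {l : List Bool // IsDyck n l ∧ flaws l = m ∧ valleys l = k}

/-- `a n m k`: the number of Dyck paths of semilength `n` with `m` flaws and `k` double ascents. -/
noncomputable def a (n m k : ℕ) : ℕ :=
  Nat.card {l : List Bool // IsDyck n l ∧ flaws l = m ∧ dascents l = k}

/-- `d n m k`: the number of Dyck paths of semilength `n` with `m` flaws and `k` double descents. -/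
noncomputable def d (n m k : ℕ) : ℕ :=
  Nat.card {l : List Bool // IsDyck n l ∧ flaws l = m ∧ ddescents l = k}

namespace Recip


def stp (a : Bool) : ℤ := if a then 1 else -1

def neg (l : List Bool) : List Bool := l.map not

def flR : ℤ → List Bool → ℕ
  | _, [] => 0
  | h, a :: t => (if a = true ∧ h < 0 then 1 else 0) + flR (h + stp a) t

def dPR : ℤ → List Bool → ℕ
  | _, [] => 0
  | h, a :: t => (if a = false ∧ 1 ≤ h then 1 else 0) + dPR (h + stp a) t

def pkR : List Bool → ℕ
  | [] => 0
  | [_] => 0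
  | a :: b :: t => (if a = true ∧ b = false then 1 else 0) + pkR (b :: t)

def vlR : List Bool → ℕ
  | [] => 0
  | [_] => 0
  | a :: b :: t => (if a = false ∧ b = true then 1 else 0) + vlR (b :: t)

def Good : ℤ → List Bool → Prop
  | _, [] => True
  | h, a :: t => 0 ≤ h + stp a ∧ Good (h + stp a) t

theorem height_nil : height [] = 0 := rfl

theorem height_cons (a : Bool) (t : List Bool) : height (a :: t) = stp a + height t := by
  cases a <;> simp [height, stp, List.count_cons] <;> ring

theorem height_append (x y : List Bool) : height (x ++ y) = height x + height y := by
  simp [height, List.count_append]; ring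

theorem count_add_count (l : List Bool) : l.count true + l.count false = l.length := by
  induction l with
  | nil => rfl
  | cons a t ih => cases a <;> simp [List.count_cons] <;> omega

theorem count_false_of_bal (l : List Bool) (h : height l = 0) :
    l.count false = l.count true := by
  unfold height at h; omega

/-- conversion: flaws as recursive function -/
theorem flaws_sum (l : List Bool) : ∀ h : ℤ,
    (∑ i ∈ Finset.range l.length,
      if (l.getD i false = true ∧ h + height (l.take i) < 0) then 1 else 0) = flR h l := by
  induction l with
  | nil => intro h; simp [flR]
  | cons a t ih =>
    intro h
    rw [List.length_cons, Finset.sum_range_succ']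
    simp only [List.take_succ_cons, List.getD_cons_succ, List.getD_cons_zero,
      List.take_zero, height_nil, height_cons, add_zero]
    rw [flR]
    have e : ∀ i, (if (t.getD i false = true ∧ h + (stp a + height (t.take i)) < 0) then 1 else 0)
        = (if (t.getD i false = true ∧ (h + stp a) + height (t.take i) < 0) then 1 else 0) :=
      fun i => if_congr (and_congr_right (fun _ => by omega)) rfl rfl
    simp only [e]
    rw [ih (h + stp a)]
    omega

theorem flaws_eq (l : List Bool) : flaws l = flR 0 l := by
  rw [flaws, Finset.card_filter, ← flaws_sum l 0]
  exact Finset.sum_congr rfl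
    (fun i _ => if_congr (and_congr_right (fun _ => by omega)) rfl rfl)

theorem peaks_eq (l : List Bool) : peaks l = pkR l := by
  induction l with
  | nil => rfl
  | cons a t ih =>
    cases t with
    | nil => rfl
    | cons b t' =>
      rw [pkR, ← ih, peaks, peaks, Finset.card_filter, Finset.card_filter]
      simp only [List.length_cons, Nat.add_sub_cancel]
      rw [Finset.sum_range_succ']
      simp only [List.getD_cons_succ, List.getD_cons_zero]
      omega

-- ### neg lemmas
@[simp] theorem neg_nil : neg [] = [] := rfl
@[simp] theorem neg_cons (a : Bool) (t : List Bool) : neg (a :: t) = (!a) :: neg t := rfl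
@[simp] theorem neg_neg (l : List Bool) : neg (neg l) = l := by
  induction l with | nil => rfl | cons a t ih => simp [ih]
@[simp] theorem neg_append (x y : List Bool) : neg (x ++ y) = neg x ++ neg y := by
  simp [neg]
@[simp] theorem length_neg (l : List Bool) : (neg l).length = l.length := by simp [neg]
theorem count_true_neg (l : List Bool) : (neg l).count true = l.count false := by
  induction l with
  | nil => rfl
  | cons a t ih => cases a <;> simp [List.count_cons, ih]
theorem count_false_neg (l : List Bool) : (neg l).count false = l.count true := by
  induction l with
  | nil => rfl
  | cons a t ih => cases a <;> simp [List.count_cons, ih]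
theorem height_neg (l : List Bool) : height (neg l) = -height l := by
  unfold height; rw [count_true_neg, count_false_neg]; ring
theorem head?_neg (l : List Bool) : (neg l).head? = l.head?.map not := by
  cases l <;> rfl
theorem getLast?_neg (l : List Bool) : (neg l).getLast? = l.getLast?.map not := by
  induction l with
  | nil => rfl
  | cons a t ih =>
    cases t with
    | nil => rfl
    | cons b t' =>
      simp only [neg_cons] at ih ⊢
      rw [List.getLast?_cons_cons, List.getLast?_cons_cons, ih]

-- ### junction counts
def jnP (x y : List Bool) : ℕ :=
  if x.getLast? = some true ∧ y.head? = some false then 1 else 0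
def jnV (x y : List Bool) : ℕ :=
  if x.getLast? = some false ∧ y.head? = some true then 1 else 0

theorem pkR_append (x y : List Bool) : pkR (x ++ y) = pkR x + pkR y + jnP x y := by
  induction x with
  | nil => simp [pkR, jnP]
  | cons a x ih =>
    cases x with
    | nil =>
      cases y with
      | nil => simp [pkR, jnP]
      | cons b t => simp only [List.singleton_append, pkR, jnP, List.getLast?_singleton,
          List.head?_cons, Option.some.injEq]; omega
    | cons c x' =>
      rw [List.cons_append, List.cons_append, pkR, ← List.cons_append, ih, pkR]
      have : jnP (a :: c :: x') y = jnP (c :: x') y := by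
        unfold jnP; rw [List.getLast?_cons_cons]
      omega

theorem vlR_append (x y : List Bool) : vlR (x ++ y) = vlR x + vlR y + jnV x y := by
  induction x with
  | nil => simp [vlR, jnV]
  | cons a x ih =>
    cases x with
    | nil =>
      cases y with
      | nil => simp [vlR, jnV]
      | cons b t => simp only [List.singleton_append, vlR, jnV, List.getLast?_singleton,
          List.head?_cons, Option.some.injEq]; omega
    | cons c x' =>
      rw [List.cons_append, List.cons_append, vlR, ← List.cons_append, ih, vlR]
      have : jnV (a :: c :: x') y = jnV (c :: x') y := by
        unfold jnV; rw [List.getLast?_cons_cons]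
      omega

theorem pkR_neg (l : List Bool) : pkR (neg l) = vlR l := by
  induction l with
  | nil => rfl
  | cons a t ih =>
    cases t with
    | nil => rfl
    | cons b t' =>
      rw [neg_cons, neg_cons, pkR, vlR, ← neg_cons, ih]
      cases a <;> cases b <;> simp

theorem vlR_neg (l : List Bool) : vlR (neg l) = pkR l := by
  have := pkR_neg (neg l); rw [neg_neg] at this; exact this.symm

/-- peak/valley balance: #UD - #DU = [first=U] - [last=U] -/
theorem pkR_vlR (l : List Bool) :
    pkR l + (if l.getLast? = some true then 1 else 0)
      = vlR l + (if l.head? = some true then 1 else 0) := by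
  induction l with
  | nil => rfl
  | cons a t ih =>
    cases t with
    | nil => cases a <;> simp [pkR, vlR]
    | cons b t' =>
      rw [pkR, vlR, List.getLast?_cons_cons, List.head?_cons]
      rw [List.head?_cons] at ih
      cases a <;> cases b <;> simp at ih ⊢ <;> omega

-- ### flR lemmas
theorem flR_append (x y : List Bool) : ∀ h, flR h (x ++ y) = flR h x + flR (h + height x) y := by
  induction x with
  | nil => intro h; simp [flR, height]
  | cons a t ih =>
    intro h
    rw [List.cons_append, flR, flR, ih, height_cons,
      show h + (stp a + height t) = h + stp a + height t from by ring]
    omega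

theorem flR_neg (l : List Bool) : ∀ h, flR h (neg l) = dPR (-h) l := by
  induction l with
  | nil => intro h; rfl
  | cons a t ih =>
    intro h
    rw [neg_cons, flR, dPR, ih]
    cases a <;> simp [stp] <;> ring_nf <;> split_ifs <;> omega

theorem dPR_flR (l : List Bool) : ∀ h : ℤ,
    (dPR h l : ℤ) + flR h l + max (h + height l) 0 = l.count true + max h 0 := by
  induction l with
  | nil => intro h; simp [dPR, flR, height]
  | cons a t ih =>
    intro h
    rw [dPR, flR, height_cons]
    have := ih (h + stp a)
    cases a <;> simp [stp, List.count_cons] at this ⊢ <;> push_cast <;> omega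

theorem flR_good (l : List Bool) : ∀ h, 0 ≤ h → Good h l → flR h l = 0 := by
  induction l with
  | nil => intro h _ _; rfl
  | cons a t ih =>
    intro h h0 hg
    obtain ⟨h1, h2⟩ := hg
    rw [flR, ih _ h1 h2]
    have : ¬(a = true ∧ h < 0) := by rintro ⟨_, h3⟩; omega
    simp [this]

theorem flR_neg_good (l : List Bool) : ∀ h, Good h l → flR (-h) (neg l) = (neg l).count true := by
  induction l with
  | nil => intro h _; rfl
  | cons a t ih =>
    intro h hg
    obtain ⟨h1, h2⟩ := hg
    have e : -h + stp (!a) = -(h + stp a) := by cases a <;> simp [stp] <;> ring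
    rw [neg_cons, flR, e, ih _ h2, List.count_cons]
    cases a
    · simp [stp] at h1
      have hc : -h < 0 := by omega
      simp [hc]
      rw [if_pos (by omega)]; omega
    · simp

-- ### Good lemmas
theorem good_append (x y : List Bool) : ∀ h, Good h (x ++ y) ↔ Good h x ∧ Good (h + height x) y := by
  induction x with
  | nil => intro h; simp [Good, height]
  | cons a t ih =>
    intro h
    rw [List.cons_append, Good, Good, ih, height_cons, ← add_assoc, and_assoc]

theorem good_mono (l : List Bool) : ∀ h h' : ℤ, h ≤ h' → Good h l → Good h' l := by
  induction l with
  | nil => intro _ _ _ _; trivial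
  | cons a t ih =>
    intro h h' hle hg
    obtain ⟨h1, h2⟩ := hg
    exact ⟨by omega, ih _ _ (by omega) h2⟩

theorem good_head (l : List Bool) (hg : Good 0 l) (hne : l ≠ []) : l.head? = some true := by
  cases l with
  | nil => exact absurd rfl hne
  | cons a t =>
    obtain ⟨h1, _⟩ := hg
    cases a
    · simp [stp] at h1
    · rfl

theorem good_last (l : List Bool) : ∀ h : ℤ, 0 ≤ h → Good h l → h + height l = 0 → l ≠ [] →
    l.getLast? = some false := by
  induction l with
  | nil => intro _ _ _ _ hne; exact absurd rfl hne
  | cons a t ih =>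
    intro h h0 hg hh _
    obtain ⟨h1, h2⟩ := hg
    cases t with
    | nil =>
      cases a
      · rfl
      · exfalso; rw [height_cons] at hh; simp [height, stp] at hh h1; omega
    | cons b t' =>
      rw [List.getLast?_cons_cons]
      refine ih (h + stp a) h1 h2 ?_ (by simp)
      rw [height_cons] at hh; omega

-- ### cut : split off maximal nonnegative balanced prefix
def cut : ℤ → List Bool → List Bool × List Bool
  | _, [] => ([], [])
  | h, a :: t =>
    if h + stp a < 0 then ([], a :: t)
    else ((a :: (cut (h + stp a) t).1), (cut (h + stp a) t).2)

theorem cut_append (l : List Bool) : ∀ h, (cut h l).1 ++ (cut h l).2 = l := by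
  induction l with
  | nil => intro h; rfl
  | cons a t ih =>
    intro h
    rw [cut]
    split
    · rfl
    · simp only [List.cons_append, ih]

theorem cut_good (l : List Bool) : ∀ h, Good h (cut h l).1 := by
  induction l with
  | nil => intro h; trivial
  | cons a t ih =>
    intro h
    rw [cut]
    split
    · trivial
    · exact ⟨by omega, ih _⟩

theorem cut_snd (l : List Bool) : ∀ h, 0 ≤ h →
    ((cut h l).2 = [] ∧ (cut h l).1 = l) ∨
    (h + height (cut h l).1 = 0 ∧ (cut h l).2.head? = some false) := by
  induction l with
  | nil => intro h _; left; exact ⟨rfl, rfl⟩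
  | cons a t ih =>
    intro h h0
    rw [cut]
    split
    · rename_i hc
      right
      have ha : a = false := by
        cases a
        · rfl
        · simp [stp] at hc; omega
      subst ha
      simp [stp] at hc
      constructor
      · simp only [height]; simp; omega
      · rfl
    · rename_i hc
      rcases ih (h + stp a) (by omega) with ⟨h1, h2⟩ | ⟨h1, h2⟩
      · left
        constructor
        · exact h1
        · rw [h2]
      · right
        refine ⟨?_, h2⟩
        rw [height_cons]
        omega

theorem cut_concat (p q : List Bool) (hq : q = [] ∨ q.head? = some false) :
    ∀ h, Good h p → h + height p = 0 → cut h (p ++ q) = (p, q) := by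
  induction p with
  | nil =>
    intro h _ hh
    rw [height] at hh; simp at hh
    rcases hq with hq | hq
    · subst hq; rfl
    · cases q with
      | nil => rfl
      | cons b t =>
        simp at hq; subst hq
        rw [List.nil_append, cut]
        have : h + stp false < 0 := by simp [stp]; omega
        simp [this]
  | cons a p' ih =>
    intro h hg hh
    obtain ⟨h1, h2⟩ := hg
    rw [List.cons_append, cut]
    have hc : ¬(h + stp a < 0) := by omega
    simp only [hc, if_false]
    rw [height_cons] at hh
    rw [ih _ h2 (by omega)]

theorem cut_len (l : List Bool) : ∀ h, (cut h l).1.length + (cut h l).2.length = l.length := by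
  induction l with
  | nil => intro h; rfl
  | cons a t ih =>
    intro h
    rw [cut]
    split
    · simp
    · simp only [List.length_cons]
      have := ih (h + stp a)
      omega

theorem cut_true (t : List Bool) :
    cut 0 (true :: t) = (true :: (cut 1 t).1, (cut 1 t).2) := by
  rw [cut]
  norm_num [stp]

-- ### cutB : split U B D C at first return
def cutB : ℤ → List Bool → List Bool × List Bool
  | _, [] => ([], [])
  | h, a :: t =>
    if h + stp a = 0 then ([], t)
    else ((a :: (cutB (h + stp a) t).1), (cutB (h + stp a) t).2)

theorem cutB_len (t : List Bool) : ∀ h, (cutB h t).1.length + (cutB h t).2.length ≤ t.length := by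
  induction t with
  | nil => intro h; simp [cutB]
  | cons a t' ih =>
    intro h
    rw [cutB]
    split
    · simp
    · simp only [List.length_cons]
      have := ih (h + stp a)
      omega

theorem cutB_split (t : List Bool) : ∀ h, 1 ≤ h → Good h t → h + height t = 0 →
    t = (cutB h t).1 ++ false :: (cutB h t).2 ∧ Good (h - 1) (cutB h t).1 ∧
      h + height (cutB h t).1 = 1 ∧ Good 0 (cutB h t).2 ∧ height (cutB h t).2 = 0 := by
  induction t with
  | nil =>
    intro h h1 _ hh
    rw [height] at hh; simp at hh; omega
  | cons a t' ih =>
    intro h h1 hg hh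
    obtain ⟨hg1, hg2⟩ := hg
    rw [height_cons] at hh
    rw [cutB]
    split
    · rename_i hc
      have ha : a = false := by
        cases a
        · rfl
        · simp [stp] at hc; omega
      subst ha
      simp [stp] at hc
      have hval : h = 1 := by omega
      refine ⟨rfl, trivial, by show h + height [] = 1; rw [height_nil]; omega, ?_, ?_⟩
      · have hz : h + stp false = 0 := by simp [stp]; omega
        rwa [hz] at hg2
      · show height t' = 0
        simp [stp] at hh; omega
    · rename_i hc
      have h1' : 1 ≤ h + stp a := by omega
      obtain ⟨e1, e2, e3, e4, e5⟩ := ih (h + stp a) h1' hg2 (by omega)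
      refine ⟨?_, ⟨by omega, ?_⟩, ?_, e4, e5⟩
      · conv_lhs => rw [e1]
        rfl
      · exact good_mono _ _ _ (by omega) e2
      · rw [height_cons]; omega

theorem cutB_concat (B C : List Bool) : ∀ h, 1 ≤ h → Good (h - 1) B → h + height B = 1 →
    cutB h (B ++ false :: C) = (B, C) := by
  induction B with
  | nil =>
    intro h h1 _ hh
    rw [height] at hh; simp at hh
    rw [List.nil_append, cutB]
    have : h + stp false = 0 := by simp [stp]; omega
    simp [this]
  | cons a B' ih =>
    intro h h1 hg hh
    obtain ⟨hg1, hg2⟩ := hg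
    rw [height_cons] at hh
    rw [List.cons_append, cutB]
    have e : h - 1 + stp a = h + stp a - 1 := by ring
    rw [e] at hg1 hg2
    have hc : ¬(h + stp a = 0) := by omega
    simp only [hc, if_false]
    rw [ih _ (by omega) hg2 (by omega)]

@[simp] theorem stp_true : stp true = 1 := rfl
@[simp] theorem stp_false : stp false = -1 := rfl

theorem head?_app (p q : List Bool) (h : p ≠ []) : (p ++ q).head? = p.head? := by
  cases p with
  | nil => exact absurd rfl h
  | cons a t => rfl

theorem good_cons_true (X : List Bool) : Good 0 (true :: X) ↔ Good 1 X := by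
  rw [Good]; norm_num

theorem good_arch (B C : List Bool) (hB : Good 0 B) (hhB : height B = 0) (hC : Good 0 C) :
    Good 0 (true :: (B ++ false :: C)) := by
  rw [good_cons_true, good_append]
  refine ⟨good_mono _ _ _ (by norm_num) hB, ?_⟩
  rw [hhB, Good]
  norm_num
  exact hC

theorem pkR_cons_true (X : List Bool) :
    pkR (true :: X) = pkR X + (if X.head? = some false then 1 else 0) := by
  have := pkR_append [true] X
  simp only [List.singleton_append] at this
  rw [this, jnP]
  simp [pkR]

theorem pkR_cons_false (X : List Bool) : pkR (false :: X) = pkR X := by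
  have := pkR_append [false] X
  simp only [List.singleton_append] at this
  rw [this, jnP]
  simp [pkR]

theorem pkR_snoc_false (X : List Bool) :
    pkR (X ++ [false]) = pkR X + (if X.getLast? = some true then 1 else 0) := by
  rw [pkR_append, jnP]
  simp [pkR]

theorem vlR_cons_true (X : List Bool) : vlR (true :: X) = vlR X := by
  have := vlR_append [true] X
  simp only [List.singleton_append] at this
  rw [this, jnV]
  simp [vlR]

theorem vlR_cons_false (X : List Bool) :
    vlR (false :: X) = vlR X + (if X.head? = some true then 1 else 0) := by
  have := vlR_append [false] X
  simp only [List.singleton_append] at this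
  rw [this, jnV]
  simp [vlR]

def lam : List Bool → List Bool
  | [] => []
  | false :: t => false :: t
  | true :: t =>
    if (cutB 1 t).1 = [] then
      (if (cutB 1 t).2 = [] then [true, false] else true :: (lam (cutB 1 t).2 ++ [false]))
    else
      (if (cutB 1 t).2 = [] then true :: false :: lam (cutB 1 t).1
       else true :: (lam (cutB 1 t).1 ++ false :: lam (cutB 1 t).2))
termination_by l => l.length
decreasing_by
  all_goals (have h := cutB_len t 1; simp only [List.length_cons]; omega)

theorem lam_nil : lam [] = [] := by rw [lam]

/-- The full specification of the Lalanne–Kreweras style involution. -/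
theorem lam_spec : ∀ (N : ℕ) (l : List Bool), l.length ≤ N → Good 0 l → height l = 0 →
    Good 0 (lam l) ∧ height (lam l) = 0 ∧ (lam l).length = l.length ∧
    (l ≠ [] → pkR (lam l) + pkR l = l.count true + 1) ∧ lam (lam l) = l := by
  intro N
  induction N with
  | zero =>
    intro l hl _ _
    have hnil : l = [] := by
      cases l with
      | nil => rfl
      | cons a t => simp at hl
    subst hnil
    refine ⟨?_, ?_, ?_, ?_, ?_⟩ <;> simp [lam_nil, Good, height]
  | succ N ih =>
    intro l hl hg hh
    cases l with
    | nil => refine ⟨?_, ?_, ?_, ?_, ?_⟩ <;> simp [lam_nil, Good, height]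
    | cons a t =>
      have ha : a = true := by
        have := good_head _ hg (by simp)
        simpa using this
      subst ha
      have hGt : Good 1 t := (good_cons_true t).mp hg
      have hht : (1:ℤ) + height t = 0 := by rw [height_cons] at hh; simpa using hh
      obtain ⟨e1, e2, e3, e4, e5⟩ := cutB_split t 1 le_rfl hGt hht
      cases hBC : cutB 1 t with
      | mk B C =>
      rw [hBC] at e1 e2 e3 e4 e5
      dsimp only at e1 e2 e3 e4 e5
      have e2' : Good 0 B := by norm_num at e2; exact e2
      have hB0 : height B = 0 := by omega
      have hlen : t.length = B.length + C.length + 1 := by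
        have := congrArg List.length e1; simp at this; omega
      have hll : (true :: t).length ≤ N + 1 := hl
      simp only [List.length_cons] at hll
      obtain ⟨gB, hhB, lnB, pkB, invB⟩ := ih B (by omega) e2' hB0
      obtain ⟨gC, hhC, lnC, pkC, invC⟩ := ih C (by omega) e4 e5
      have cntt : (true :: t).count true = B.count true + C.count true + 1 := by
        rw [e1, List.count_cons, List.count_append, List.count_cons] <;>
          simp <;> omega
      by_cases hBe : B = []
      · by_cases hCe : C = []
        · -- l = [true, false]
          subst hBe; subst hCe
          simp only [List.nil_append] at e1
          subst e1
          have hlam : lam [true, false] = [true, false] := by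
            rw [lam, hBC]; simp
          rw [hlam]
          refine ⟨⟨by norm_num, by norm_num, trivial⟩, by simp [height], rfl, ?_, hlam⟩
          intro _
          decide
        · -- l = true :: false :: C,  lam l = true :: (lam C ++ [false])
          subst hBe
          simp only [List.nil_append] at e1
          have hlam : lam (true :: t) = true :: (lam C ++ [false]) := by
            rw [lam, hBC]; simp [hCe]
          have hlamC_ne : lam C ≠ [] := by
            intro hx
            apply hCe
            have h9 := lnC; rw [hx] at h9; simp at h9
            exact List.length_eq_zero_iff.mp h9.symm
          have hdC : (lam C).head? = some true := good_head _ gC hlamC_ne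
          have hlC : (lam C).getLast? = some false :=
            good_last _ 0 le_rfl gC (by omega) hlamC_ne
          rw [hlam]
          refine ⟨?_, ?_, ?_, ?_, ?_⟩
          · have h9 := good_arch (lam C) [] gC hhC trivial
            simpa using h9
          · rw [height_cons, height_append, hhC]; norm_num [height]
          · rw [e1]; simp [lnC]
          · intro _
            rw [pkR_cons_true, head?_app _ _ hlamC_ne, hdC]
            rw [pkR_snoc_false, hlC]
            rw [e1] at cntt ⊢
            rw [pkR_cons_true, List.head?_cons, pkR_cons_false]
            have h9 := pkC hCe
            simp [List.count_cons, List.count_append] at cntt ⊢ <;> omega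
          · -- involution
            rw [lam]
            have hcc : cutB 1 (lam C ++ [false]) = (lam C, []) := by
              have h9 := cutB_concat (lam C) [] 1 le_rfl (by simpa using gC) (by rw [hhC]; norm_num)
              simpa using h9
            rw [hcc]
            dsimp only
            rw [if_neg hlamC_ne, if_pos rfl, invC]
            rw [e1]
      · by_cases hCe : C = []
        · -- l = true :: B ++ [false],  lam l = true :: false :: lam B
          subst hCe
          have hlam : lam (true :: t) = true :: false :: lam B := by
            rw [lam, hBC]; simp [hBe]
          have hlamB_ne : lam B ≠ [] := by
            intro hx
            apply hBe
            have h9 := lnB; rw [hx] at h9; simp at h9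
            exact List.length_eq_zero_iff.mp h9.symm
          have hdB : (lam B).head? = some true := good_head _ gB hlamB_ne
          have hdB' : B.head? = some true := good_head _ e2' hBe
          have hlB' : B.getLast? = some false :=
            good_last _ 0 le_rfl e2' (by omega) hBe
          rw [hlam]
          refine ⟨?_, ?_, ?_, ?_, ?_⟩
          · have h9 := good_arch [] (lam B) trivial (by simp [height]) gB
            simpa using h9
          · rw [height_cons, height_cons, hhB]; norm_num
          · rw [e1]; simp [lnB]
          · intro _
            rw [pkR_cons_true, List.head?_cons, if_pos rfl, pkR_cons_false]
            rw [e1] at cntt ⊢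
            rw [pkR_cons_true, head?_app _ _ hBe, hdB']
            rw [pkR_append, jnP, hlB']
            have h9 := pkB hBe
            have h10 : pkR [false] = 0 := rfl
            simp [List.count_cons, List.count_append] at cntt ⊢ <;> omega
          · -- involution
            rw [lam]
            have hcc : cutB 1 (false :: lam B) = ([], lam B) := by
              rw [cutB]; norm_num
            rw [hcc]
            dsimp only
            rw [if_pos rfl, if_neg hlamB_ne, invB]
            rw [e1]
        · -- main case: lam l = true :: (lam B ++ false :: lam C)
          have hlam : lam (true :: t) = true :: (lam B ++ false :: lam C) := by
            rw [lam, hBC]; simp [hBe, hCe]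
          have hlamB_ne : lam B ≠ [] := by
            intro hx
            apply hBe
            have h9 := lnB; rw [hx] at h9; simp at h9
            exact List.length_eq_zero_iff.mp h9.symm
          have hlamC_ne : lam C ≠ [] := by
            intro hx
            apply hCe
            have h9 := lnC; rw [hx] at h9; simp at h9
            exact List.length_eq_zero_iff.mp h9.symm
          have hdB : (lam B).head? = some true := good_head _ gB hlamB_ne
          have hlB : (lam B).getLast? = some false :=
            good_last _ 0 le_rfl gB (by omega) hlamB_ne
          have hdB' : B.head? = some true := good_head _ e2' hBe
          have hlB' : B.getLast? = some false :=
            good_last _ 0 le_rfl e2' (by omega) hBe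
          rw [hlam]
          refine ⟨good_arch _ _ gB hhB gC, ?_, ?_, ?_, ?_⟩
          · rw [height_cons, height_append, hhB, height_cons, hhC]; norm_num
          · rw [e1]; simp [lnB, lnC]
          · intro _
            rw [pkR_cons_true, head?_app _ _ hlamB_ne, hdB]
            rw [pkR_append, jnP, hlB, pkR_cons_false]
            rw [e1] at cntt ⊢
            rw [pkR_cons_true, head?_app _ _ hBe, hdB']
            rw [pkR_append, jnP, hlB', pkR_cons_false]
            have h9 := pkB hBe
            have h10 := pkC hCe
            simp [List.count_cons, List.count_append] at cntt ⊢ <;> omega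
          · -- involution
            rw [lam]
            have hcc : cutB 1 (lam B ++ false :: lam C) = (lam B, lam C) :=
              cutB_concat (lam B) (lam C) 1 le_rfl (by simpa using gB) (by rw [hhB]; norm_num)
            rw [hcc]
            dsimp only
            rw [if_neg hlamB_ne, if_neg hlamC_ne, invB, invC]
            rw [e1]

def theta : List Bool → List Bool
  | [] => []
  | true :: t =>
      lam (cut 0 (true :: t)).1 ++ theta (cut 0 (true :: t)).2
  | false :: t =>
      neg (lam (cut 0 (true :: neg t)).1) ++ theta (neg (cut 0 (true :: neg t)).2)
termination_by l => l.length
decreasing_by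
  · rw [cut_true]
    have := cut_len t 1
    simp only [List.length_cons]
    omega
  · rw [cut_true]
    have := cut_len (neg t) 1
    simp only [length_neg] at this
    simp only [List.length_cons, length_neg]
    omega

theorem theta_nil : theta [] = [] := by rw [theta]

theorem theta_spec : ∀ (N : ℕ) (l : List Bool), l.length ≤ N → height l = 0 →
    height (theta l) = 0 ∧ (theta l).length = l.length ∧
    (theta l).count true = l.count true ∧
    (theta l).head? = l.head? ∧ flR 0 (theta l) = flR 0 l ∧
    pkR (theta l) + vlR l = l.count true ∧ theta (theta l) = l ∧
    theta (neg l) = neg (theta l) := by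
  intro N
  induction N with
  | zero =>
    intro l hl _
    have hnil : l = [] := by
      cases l with
      | nil => rfl
      | cons a t => simp at hl
    subst hnil
    simp [theta_nil, height, vlR, pkR, flR]
  | succ N ih =>
    intro l hl hh
    cases l with
    | nil => simp [theta_nil, height, vlR, pkR, flR]
    | cons a t =>
    cases a with
    | true =>
      -- positive block
      cases hxy : cut 0 (true :: t) with
      | mk x y =>
      have hth : theta (true :: t) = lam x ++ theta y := by
        rw [theta, hxy]
      have happ : x ++ y = true :: t := by
        have := cut_append (true :: t) 0; rw [hxy] at this; exact this
      have gx : Good 0 x := by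
        have := cut_good (true :: t) 0; rw [hxy] at this; exact this
      have hxne : x ≠ [] := by
        have := cut_true t; rw [hxy] at this
        intro hc; rw [hc] at this; simp at this
      have hsnd := cut_snd (true :: t) 0 le_rfl
      rw [hxy] at hsnd; dsimp only at hsnd
      have hx0 : height x = 0 := by
        rcases hsnd with ⟨h1, h2⟩ | ⟨h1, _⟩
        · rw [h2]; exact hh
        · omega
      have hy : y = [] ∨ y.head? = some false := by
        rcases hsnd with ⟨h1, _⟩ | ⟨_, h2⟩
        · exact Or.inl h1
        · exact Or.inr h2
      have hy0 : height y = 0 := by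
        have := height_append x y; rw [happ] at this; rw [hh] at this; omega
      have hlen : x.length + y.length = t.length + 1 := by
        have := congrArg List.length happ; simpa using this
      have hxlen : 1 ≤ x.length := by
        cases x with
        | nil => exact absurd rfl hxne
        | cons u v => simp
      obtain ⟨glx, hhlx, lnlx, pklx, invx⟩ := lam_spec x.length x le_rfl gx hx0
      have hll : (true :: t).length ≤ N + 1 := hl
      simp only [List.length_cons] at hll
      obtain ⟨ihy0, ihy1, ihy2, ihy3, ihy4, ihy5, ihy6, ihy7⟩ :=
        ih y (by omega) hy0
      have hlamx_ne : lam x ≠ [] := by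
        intro hc; rw [hc] at lnlx; simp at lnlx; omega
      have hdlx : (lam x).head? = some true := good_head _ glx hlamx_ne
      have hllx : (lam x).getLast? = some false :=
        good_last _ 0 le_rfl glx (by omega) hlamx_ne
      have hlx' : x.getLast? = some false :=
        good_last _ 0 le_rfl gx (by omega) hxne
      have hdx : x.head? = some true := good_head _ gx hxne
      have cntlx : (lam x).count true = x.count true := by
        have h1 := count_add_count (lam x)
        have h2 := count_add_count x
        have h3 := count_false_of_bal _ hhlx
        have h4 := count_false_of_bal _ hx0
        omega
      have pvx : pkR x = vlR x + 1 := by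
        have := pkR_vlR x
        rw [hlx', hdx] at this
        simp at this
        omega
      have hthy_hd : (theta y).head? = y.head? := ihy3
      have hjq : theta y = [] ∨ (theta y).head? = some false := by
        rcases hy with h | h
        · left; rw [h, theta_nil]
        · right; rw [hthy_hd, h]
      rw [hth]
      refine ⟨?_, ?_, ?_, ?_, ?_, ?_, ?_, ?_⟩
      · rw [height_append, hhlx, ihy0]; ring
      · rw [List.length_append, lnlx, ihy1]
        simp only [List.length_cons]
        omega
      · rw [List.count_append, cntlx, ihy2]
        have := congrArg (List.count true) happ
        rw [List.count_append] at this
        omega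
      · rw [head?_app _ _ hlamx_ne, hdlx]; rfl
      · rw [flR_append, hhlx]
        simp only [add_zero]
        rw [flR_good _ _ le_rfl glx, ihy4]
        have : flR 0 (true :: t) = flR 0 x + flR 0 y := by
          conv_lhs => rw [← happ]
          rw [flR_append, hx0]
          norm_num
        have hfx : flR 0 x = 0 := flR_good _ _ le_rfl gx
        omega
      · -- peaks + valleys
        rw [pkR_append, jnP]
        have hjp0 : ¬((lam x).getLast? = some true ∧ (theta y).head? = some false) := by
          rw [hllx]; simp
        rw [if_neg hjp0]
        have hvl : vlR (true :: t) = vlR x + vlR y := by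
          conv_lhs => rw [← happ]
          rw [vlR_append, jnV]
          have : ¬(x.getLast? = some false ∧ y.head? = some true) := by
            rcases hy with h | h
            · rw [h]; simp
            · rw [h]; simp
          rw [if_neg this]
          omega
        rw [hvl]
        have hcnt : (true :: t).count true = x.count true + y.count true := by
          have := congrArg (List.count true) happ
          rw [List.count_append] at this
          omega
        have hpk := pklx hxne
        omega
      · -- involution
        obtain ⟨z, hz⟩ : ∃ z, lam x = true :: z := by
          cases hlx : lam x with
          | nil => exact absurd hlx hlamx_ne
          | cons u v =>
            rw [hlx] at hdlx; simp at hdlx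
            exact ⟨v, by rw [hdlx]⟩
        have hcc : cut 0 (lam x ++ theta y) = (lam x, theta y) :=
          cut_concat (lam x) (theta y) hjq 0 glx (by rw [hhlx]; norm_num)
        have hform : lam x ++ theta y = true :: (z ++ theta y) := by rw [hz]; rfl
        rw [hform, theta, ← hform, hcc]
        dsimp only
        rw [invx, ihy6]
        exact happ
      · -- theta ∘ neg = neg ∘ theta
        have hnegl : neg (true :: t) = false :: neg t := rfl
        rw [hnegl, theta]
        rw [neg_neg]
        rw [hxy]
        dsimp only
        rw [ihy7, ← neg_append]
    | false =>
      -- negative block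
      cases hxy : cut 0 (true :: neg t) with
      | mk x y =>
      have hth : theta (false :: t) = neg (lam x) ++ theta (neg y) := by
        rw [theta, hxy]
      have happ : x ++ y = true :: neg t := by
        have := cut_append (true :: neg t) 0; rw [hxy] at this; exact this
      have hlneg : (true :: neg t) = neg (false :: t) := rfl
      have happL : neg x ++ neg y = false :: t := by
        have := congrArg neg happ
        rw [neg_append, hlneg, neg_neg] at this
        exact this
      have gx : Good 0 x := by
        have := cut_good (true :: neg t) 0; rw [hxy] at this; exact this
      have hxne : x ≠ [] := by
        have := cut_true (neg t); rw [hxy] at this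
        intro hc; rw [hc] at this; simp at this
      have hhneg : height (true :: neg t) = 0 := by
        rw [hlneg, height_neg, hh]; ring
      have hsnd := cut_snd (true :: neg t) 0 le_rfl
      rw [hxy] at hsnd; dsimp only at hsnd
      have hx0 : height x = 0 := by
        rcases hsnd with ⟨h1, h2⟩ | ⟨h1, _⟩
        · rw [h2]; exact hhneg
        · omega
      have hy : y = [] ∨ y.head? = some false := by
        rcases hsnd with ⟨h1, _⟩ | ⟨_, h2⟩
        · exact Or.inl h1
        · exact Or.inr h2
      have hy0 : height y = 0 := by
        have := height_append x y; rw [happ] at this; rw [hhneg] at this; omega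
      have hny0 : height (neg y) = 0 := by rw [height_neg, hy0]; ring
      have hlen : x.length + y.length = t.length + 1 := by
        have := congrArg List.length happ; simpa using this
      have hxlen : 1 ≤ x.length := by
        cases x with
        | nil => exact absurd rfl hxne
        | cons u v => simp
      obtain ⟨glx, hhlx, lnlx, pklx, invx⟩ := lam_spec x.length x le_rfl gx hx0
      have hll : (false :: t).length ≤ N + 1 := hl
      simp only [List.length_cons] at hll
      obtain ⟨ihy0, ihy1, ihy2, ihy3, ihy4, ihy5, ihy6, ihy7⟩ :=
        ih (neg y) (by rw [length_neg]; omega) hny0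
      have hlamx_ne : lam x ≠ [] := by
        intro hc; rw [hc] at lnlx; simp at lnlx; omega
      have hnlamx_ne : neg (lam x) ≠ [] := by
        intro hc
        have h9 : (neg (lam x)).length = 0 := by rw [hc]; rfl
        rw [length_neg, lnlx] at h9
        omega
      have hdlx : (lam x).head? = some true := good_head _ glx hlamx_ne
      have hllx : (lam x).getLast? = some false :=
        good_last _ 0 le_rfl glx (by omega) hlamx_ne
      have hlx' : x.getLast? = some false :=
        good_last _ 0 le_rfl gx (by omega) hxne
      have hdx : x.head? = some true := good_head _ gx hxne
      have cntlx : (lam x).count true = x.count true := by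
        have h1 := count_add_count (lam x)
        have h2 := count_add_count x
        have h3 := count_false_of_bal _ hhlx
        have h4 := count_false_of_bal _ hx0
        omega
      have cntflx : (lam x).count false = x.count false := by
        have h1 := count_add_count (lam x)
        have h2 := count_add_count x
        omega
      have pvlx : pkR (lam x) = vlR (lam x) + 1 := by
        have := pkR_vlR (lam x)
        rw [hllx, hdlx] at this
        simp at this
        omega
      have hdny : (neg y).head? = Option.map not y.head? := head?_neg y
      have hjq : neg (theta (neg y)) = [] ∨ (neg (theta (neg y))).head? = some false := by
        rcases hy with h | h
        · left; rw [h]; rw [show neg ([]:List Bool) = [] from rfl, theta_nil]; rfl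
        · right
          rw [head?_neg, ihy3, hdny, h]
          rfl
      rw [hth]
      refine ⟨?_, ?_, ?_, ?_, ?_, ?_, ?_, ?_⟩
      · rw [height_append, height_neg, hhlx, ihy0]; ring
      · rw [List.length_append, length_neg, lnlx, ihy1, length_neg]
        have := congrArg List.length happL
        simp at this
        simp only [List.length_cons]
        omega
      · rw [List.count_append, count_true_neg, cntflx, ihy2]
        have := congrArg (List.count true) happL
        rw [List.count_append, count_true_neg] at this
        omega
      · rw [head?_app _ _ hnlamx_ne, head?_neg, hdlx]; rfl
      · -- flaws
        rw [flR_append]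
        have h1 : height (neg (lam x)) = 0 := by rw [height_neg, hhlx]; ring
        rw [h1]
        simp only [add_zero]
        have h2 : flR 0 (neg (lam x)) = (neg (lam x)).count true := by
          have := flR_neg_good (lam x) 0 glx
          norm_num at this
          exact this
        have h3 : flR 0 (neg x) = (neg x).count true := by
          have := flR_neg_good x 0 gx
          norm_num at this
          exact this
        have h4 : flR 0 (false :: t) = flR 0 (neg x) + flR 0 (neg y) := by
          conv_lhs => rw [← happL]
          rw [flR_append]
          have : height (neg x) = 0 := by rw [height_neg, hx0]; ring
          rw [this]
          norm_num
        rw [h2, h4, ihy4]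
        have h5 : (neg (lam x)).count true = (neg x).count true := by
          rw [count_true_neg, count_true_neg, cntflx]
        omega
      · -- peaks + valleys
        rw [pkR_append, jnP]
        have hjp0 : ¬((neg (lam x)).getLast? = some true ∧
            (theta (neg y)).head? = some false) := by
          rintro ⟨-, h2⟩
          rw [ihy3, hdny] at h2
          rcases hy with h | h
          · rw [h] at h2; simp at h2
          · rw [h] at h2; simp at h2
        rw [if_neg hjp0]
        have hpknl : pkR (neg (lam x)) = vlR (lam x) := pkR_neg (lam x)
        have hvl : vlR (false :: t) = pkR x + vlR (neg y) := by
          conv_lhs => rw [← happL]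
          rw [vlR_append, jnV]
          have hc : ¬((neg x).getLast? = some false ∧ (neg y).head? = some true) := by
            rintro ⟨h1, -⟩
            rw [getLast?_neg, hlx'] at h1
            simp at h1
          rw [if_neg hc, vlR_neg]
          omega
        rw [hvl, hpknl]
        have hcnt : (false :: t).count true = (neg x).count true + (neg y).count true := by
          have := congrArg (List.count true) happL
          rw [List.count_append] at this
          omega
        have hpk := pklx hxne
        have hcnx : (neg x).count true = x.count true := by
          rw [count_true_neg, count_false_of_bal x hx0]
        omega
      · -- involution
        obtain ⟨z, hz⟩ : ∃ z, lam x = true :: z := by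
          cases hlx : lam x with
          | nil => exact absurd hlx hlamx_ne
          | cons u v =>
            rw [hlx] at hdlx; simp at hdlx
            exact ⟨v, by rw [hdlx]⟩
        have hcc : cut 0 (lam x ++ neg (theta (neg y))) = (lam x, neg (theta (neg y))) :=
          cut_concat (lam x) (neg (theta (neg y))) hjq 0 glx (by rw [hhlx]; norm_num)
        have hform : neg (lam x) ++ theta (neg y) = false :: (neg z ++ theta (neg y)) := by
          rw [hz]; rfl
        rw [hform, theta]
        have hback : true :: neg (neg z ++ theta (neg y)) = lam x ++ neg (theta (neg y)) := by
          rw [neg_append, neg_neg, hz]; rfl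
        rw [hback, hcc]
        dsimp only
        rw [invx, neg_neg, ihy6]
        exact happL
      · -- theta ∘ neg = neg ∘ theta
        rw [← hlneg, theta, hxy]
        dsimp only
        rw [neg_append, neg_neg]
        rw [neg_neg] at ihy7
        rw [ihy7]

def phi (l : List Bool) : List Bool := neg (theta l)

theorem phi_spec (n : ℕ) (l : List Bool) (hD : IsDyck n l) :
    IsDyck n (phi l) ∧ flaws (phi l) + flaws l = n ∧ peaks (phi l) + peaks l = n ∧
    phi (phi l) = l := by
  obtain ⟨hlen, hcnt⟩ := hD
  have hcf : l.count false = n := by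
    have h9 := count_add_count l; omega
  have hbal : height l = 0 := by rw [height, hcnt, hcf]; ring
  obtain ⟨t0, t1, t2, t3, t4, t5, t6, t7⟩ := theta_spec l.length l le_rfl hbal
  obtain ⟨s0, s1, s2, s3, s4, s5, s6, s7⟩ :=
    theta_spec (theta l).length (theta l) le_rfl t0
  refine ⟨⟨?_, ?_⟩, ?_, ?_, ?_⟩
  · rw [phi, length_neg, t1, hlen]
  · rw [phi, count_true_neg]
    have h1 := count_add_count (theta l)
    rw [t1, t2, hcnt, hlen] at h1
    omega
  · -- flaws
    rw [flaws_eq, flaws_eq, phi]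
    have h1 : flR 0 (neg (theta l)) = dPR 0 (theta l) := by
      have h9 := flR_neg (theta l) 0
      norm_num at h9
      exact h9
    have h2 := dPR_flR (theta l) 0
    rw [t0] at h2
    norm_num at h2
    rw [h1]
    rw [t2, hcnt] at h2
    rw [t4] at h2
    omega
  · -- peaks
    rw [peaks_eq, peaks_eq, phi, pkR_neg]
    rw [t6, t2, hcnt] at s5
    omega
  · rw [phi, phi, s7, neg_neg, t6]

end Recip

/-- The reciprocity theorem for peaks: `p n m k = p n (n-m) (n-k)`. -/
theorem peak_reciprocity (n m k : ℕ) (hn : 1 ≤ n) (hm : m ≤ n) (hk : k ≤ n) :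
    p n m k = p n (n - m) (n - k) := by
  apply Nat.card_congr
  refine
    { toFun := fun x => ⟨Recip.phi x.1, ?_⟩
      invFun := fun x => ⟨Recip.phi x.1, ?_⟩
      left_inv := fun x => ?_
      right_inv := fun x => ?_ }
  · obtain ⟨hD, hf, hp⟩ := x.2
    obtain ⟨hD', hf', hp', _⟩ := Recip.phi_spec n x.1 hD
    exact ⟨hD', by omega, by omega⟩
  · obtain ⟨hD, hf, hp⟩ := x.2
    obtain ⟨hD', hf', hp', _⟩ := Recip.phi_spec n x.1 hD
    exact ⟨hD', by omega, by omega⟩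
  · obtain ⟨hD, hf, hp⟩ := x.2
    exact Subtype.ext (Recip.phi_spec n x.1 hD).2.2.2
  · obtain ⟨hD, hf, hp⟩ := x.2
    exact Subtype.ext (Recip.phi_spec n x.1 hD).2.2.2
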